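/- Let b₀, b₁ ∈ ℝ^m and define u_* : ℝ → ℝ^m by u_*(t) = b₀ for t ≤ −1, u_*(t) = ((1−t)/2) b₀ + ((1+t)/2) b₁ for −1 < t < 1, and u_*(t) = b₁ for t ≥ 1; for j ∈ ℕ, j ≥ 1, let u_j : (−1,1) → ℝ^m be given by u_j(x) := u_*(jx). Then for every 1 ≤ p < ∞ and every j ≥ 1, ∬_{(−1,1)×(−1,1)} |u_j(y) − u_j(x)|^p / |y − x|^{2} dy dx ≥ 2 |b₁ − b₀|^p · ln((j+1)² / (4j)). -/

import Mathlib

open MeasureTheory Set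
open scoped ENNReal NNReal

/-- The function `u_*` which equals `b₀` for `t ≤ -1`, interpolates affinely between `b₀`
and `b₁` on `(-1, 1)`, and equals `b₁` for `t ≥ 1`. -/
noncomputable def ustar {m : ℕ} (b₀ b₁ : EuclideanSpace ℝ (Fin m)) (t : ℝ) :
    EuclideanSpace ℝ (Fin m) :=
  if t ≤ -1 then b₀
  else if t < 1 then ((1 - t) / 2) • b₀ + ((1 + t) / 2) • b₁
  else b₁

lemma inner_calc (a b x : ℝ) (hab : a ≤ b) (hx : x ∉ Icc a b) :
    ∫⁻ y in Ioo a b, ENNReal.ofReal (((y - x) ^ 2)⁻¹)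
      = ENNReal.ofReal ((a - x)⁻¹ - (b - x)⁻¹) := by
  have hne : ∀ y ∈ Icc a b, y - x ≠ 0 := by
    intro y hy h
    exact hx (by rw [← sub_eq_zero.mp h]; exact hy)
  have hcont : ContinuousOn (fun y : ℝ => ((y - x) ^ 2)⁻¹) (Icc a b) :=
    ContinuousOn.inv₀ (by fun_prop) (fun y hy => pow_ne_zero 2 (hne y hy))
  have hint : IntegrableOn (fun y : ℝ => ((y - x) ^ 2)⁻¹) (Ioo a b) :=
    (hcont.integrableOn_Icc).mono_set Ioo_subset_Icc_self
  rw [← ofReal_integral_eq_lintegral_ofReal hint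
      (ae_of_all _ fun y => inv_nonneg.mpr (sq_nonneg _))]
  congr 1
  rw [← integral_Ioc_eq_integral_Ioo, ← intervalIntegral.integral_of_le hab]
  have hval : ∫ y in a..b, ((y - x) ^ 2)⁻¹ = (-(b - x)⁻¹) - (-(a - x)⁻¹) := by
    apply intervalIntegral.integral_eq_sub_of_hasDerivAt
    · intro y hy
      rw [uIcc_of_le hab] at hy
      have h1 : HasDerivAt (fun y : ℝ => y - x) 1 y := (hasDerivAt_id y).sub_const x
      have h2 := (h1.inv (hne y hy)).neg
      convert h2 using 1
      · funext z; simp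
      · ring
    · exact (hcont.mono (by rw [uIcc_of_le hab])).intervalIntegrable
  rw [hval]; ring

lemma log_val (c : ℝ) (hc0 : 0 < c) :
    2 * Real.log (1 + c) - Real.log (2 * c) - Real.log 2
      = Real.log ((1 + c) ^ 2 / (4 * c)) := by
  have h1 : (0:ℝ) < 1 + c := by linarith
  rw [Real.log_div (by positivity) (by positivity), Real.log_pow,
    Real.log_mul (by norm_num) hc0.ne', Real.log_mul (by norm_num) hc0.ne']
  have : Real.log 4 = 2 * Real.log 2 := by
    rw [show (4:ℝ) = 2 ^ 2 by norm_num, Real.log_pow]; push_cast; ring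
  rw [this]; ring

lemma outer_left (c : ℝ) (hc0 : 0 < c) (hc1 : c ≤ 1) :
    ∫⁻ x in Ioo (-1) (-c), ENNReal.ofReal ((c - x)⁻¹ - (1 - x)⁻¹)
      = ENNReal.ofReal (Real.log ((1 + c) ^ 2 / (4 * c))) := by
  have hab : (-1 : ℝ) ≤ -c := by linarith
  have hne1 : ∀ x ∈ Icc (-1 : ℝ) (-c), c - x ≠ 0 := fun x hx => by
    have := hx.2; intro h; nlinarith
  have hne2 : ∀ x ∈ Icc (-1 : ℝ) (-c), 1 - x ≠ 0 := fun x hx => by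
    have := hx.2; intro h; nlinarith
  have hcont : ContinuousOn (fun x : ℝ => (c - x)⁻¹ - (1 - x)⁻¹) (Icc (-1) (-c)) :=
    ContinuousOn.sub (ContinuousOn.inv₀ (by fun_prop) hne1)
      (ContinuousOn.inv₀ (by fun_prop) hne2)
  have hint : IntegrableOn (fun x : ℝ => (c - x)⁻¹ - (1 - x)⁻¹) (Ioo (-1) (-c)) :=
    (hcont.integrableOn_Icc).mono_set Ioo_subset_Icc_self
  have hnn : ∀ x ∈ Ioo (-1 : ℝ) (-c), 0 ≤ (c - x)⁻¹ - (1 - x)⁻¹ := by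
    intro x hx
    have h1 : (0:ℝ) < c - x := by have := hx.2; linarith
    have := inv_anti₀ h1 (by linarith : c - x ≤ 1 - x)
    linarith
  rw [← ofReal_integral_eq_lintegral_ofReal hint
      ((ae_restrict_iff' measurableSet_Ioo).mpr (ae_of_all _ hnn))]
  congr 1
  rw [← integral_Ioc_eq_integral_Ioo, ← intervalIntegral.integral_of_le hab]
  have hval : ∫ x in (-1 : ℝ)..(-c), ((c - x)⁻¹ - (1 - x)⁻¹)
      = (Real.log (1 - (-c)) - Real.log (c - (-c)))
        - (Real.log (1 - (-1)) - Real.log (c - (-1))) := by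
    apply intervalIntegral.integral_eq_sub_of_hasDerivAt
      (f := fun x => Real.log (1 - x) - Real.log (c - x))
    · intro x hx
      rw [uIcc_of_le hab] at hx
      have d1 : HasDerivAt (fun x : ℝ => 1 - x) (-1) x := by
        simpa using (hasDerivAt_id x).const_sub 1
      have d2 : HasDerivAt (fun x : ℝ => c - x) (-1) x := by
        simpa using (hasDerivAt_id x).const_sub c
      have h2 := (d1.log (hne2 x hx)).sub (d2.log (hne1 x hx))
      convert h2 using 1
      · funext z; simp
      · ring
    · exact (hcont.mono (by rw [uIcc_of_le hab])).intervalIntegrable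
  rw [hval, ← log_val c hc0]
  rw [show (1 : ℝ) - (-c) = 1 + c by ring, show c - (-c) = 2 * c by ring,
    show (1 : ℝ) - (-1) = 2 by norm_num, show c - (-1) = 1 + c by ring]
  ring

lemma outer_right (c : ℝ) (hc0 : 0 < c) (hc1 : c ≤ 1) :
    ∫⁻ x in Ioo c 1, ENNReal.ofReal ((-1 - x)⁻¹ - (-c - x)⁻¹)
      = ENNReal.ofReal (Real.log ((1 + c) ^ 2 / (4 * c))) := by
  have key : ∀ x : ℝ, (-1 - x)⁻¹ - (-c - x)⁻¹ = (x + c)⁻¹ - (x + 1)⁻¹ := by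
    intro x
    rw [show (-1 : ℝ) - x = -(x + 1) by ring, show -c - x = -(x + c) by ring,
      inv_neg, inv_neg]
    ring
  simp only [key]
  have hne1 : ∀ x ∈ Icc c 1, x + c ≠ 0 := fun x hx => by
    have := hx.1; intro h; nlinarith
  have hne2 : ∀ x ∈ Icc c 1, x + 1 ≠ 0 := fun x hx => by
    have := hx.1; intro h; nlinarith
  have hcont : ContinuousOn (fun x : ℝ => (x + c)⁻¹ - (x + 1)⁻¹) (Icc c 1) :=
    ContinuousOn.sub (ContinuousOn.inv₀ (by fun_prop) hne1)
      (ContinuousOn.inv₀ (by fun_prop) hne2)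
  have hint : IntegrableOn (fun x : ℝ => (x + c)⁻¹ - (x + 1)⁻¹) (Ioo c 1) :=
    (hcont.integrableOn_Icc).mono_set Ioo_subset_Icc_self
  have hnn : ∀ x ∈ Ioo c 1, 0 ≤ (x + c)⁻¹ - (x + 1)⁻¹ := by
    intro x hx
    have h1 : (0:ℝ) < x + c := by have := hx.1; linarith
    have := inv_anti₀ h1 (by linarith : x + c ≤ x + 1)
    linarith
  rw [← ofReal_integral_eq_lintegral_ofReal hint
      ((ae_restrict_iff' measurableSet_Ioo).mpr (ae_of_all _ hnn))]
  congr 1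
  rw [← integral_Ioc_eq_integral_Ioo, ← intervalIntegral.integral_of_le hc1]
  have hval : ∫ x in c..(1:ℝ), ((x + c)⁻¹ - (x + 1)⁻¹)
      = (Real.log (1 + c) - Real.log (1 + 1))
        - (Real.log (c + c) - Real.log (c + 1)) := by
    apply intervalIntegral.integral_eq_sub_of_hasDerivAt
      (f := fun x => Real.log (x + c) - Real.log (x + 1))
    · intro x hx
      rw [uIcc_of_le hc1] at hx
      have d1 : HasDerivAt (fun x : ℝ => x + c) 1 x := (hasDerivAt_id x).add_const c
      have d2 : HasDerivAt (fun x : ℝ => x + 1) 1 x := (hasDerivAt_id x).add_const 1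
      have h2 := (d1.log (hne1 x hx)).sub (d2.log (hne2 x hx))
      convert h2 using 1
      · funext z; simp
      · ring
    · exact (hcont.mono (by rw [uIcc_of_le hc1])).intervalIntegrable
  rw [hval, ← log_val c hc0]
  rw [show c + c = 2 * c by ring, show (1:ℝ) + 1 = 2 by norm_num,
    show c + 1 = 1 + c by ring]
  ring

lemma point_eq {m : ℕ} (v : EuclideanSpace ℝ (Fin m)) (p : ℝ) (hp : 1 ≤ p)
    (x y : ℝ) (hxy : y - x ≠ 0) :
    (‖v‖₊ : ℝ≥0∞) ^ p / (‖y - x‖₊ : ℝ≥0∞) ^ (2 : ℝ)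
      = ENNReal.ofReal (‖v‖ ^ p) * ENNReal.ofReal (((y - x) ^ 2)⁻¹) := by
  have h2 : (‖y - x‖₊ : ℝ≥0∞) ^ (2:ℝ) = ENNReal.ofReal ((y - x) ^ 2) := by
    rw [← ENNReal.ofReal_coe_nnreal, coe_nnnorm, ENNReal.ofReal_rpow_of_nonneg (norm_nonneg _) (by norm_num)]
    congr 1
    rw [Real.norm_eq_abs, show (2:ℝ) = ((2:ℕ):ℝ) by norm_num, Real.rpow_natCast, sq_abs]
  have h1 : (‖v‖₊ : ℝ≥0∞) ^ p = ENNReal.ofReal (‖v‖ ^ p) := by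
    rw [← ENNReal.ofReal_coe_nnreal, coe_nnnorm,
      ENNReal.ofReal_rpow_of_nonneg (norm_nonneg _) (le_trans zero_le_one hp)]
  have hpos : (0:ℝ) < (y - x) ^ 2 := by
    have := abs_pos.mpr hxy
    calc (0:ℝ) < |y - x| ^ 2 := pow_pos this 2
    _ = (y - x) ^ 2 := sq_abs _
  rw [h1, h2, ← ENNReal.ofReal_div_of_pos hpos, div_eq_mul_inv,
    ENNReal.ofReal_mul (by positivity)]

/-- lower bound for the critical (`sp = 1`) Gagliardo seminorm of the
rescaled functions `u_j(x) = u_*(j x)` on `(-1, 1)`. -/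
theorem stmt_12 (m : ℕ) (b₀ b₁ : EuclideanSpace ℝ (Fin m)) (p : ℝ) (hp : 1 ≤ p)
    (j : ℕ) (hj : 1 ≤ j) :
    ENNReal.ofReal (2 * ‖b₁ - b₀‖ ^ p * Real.log (((j : ℝ) + 1) ^ 2 / (4 * (j : ℝ))))
      ≤ ∫⁻ x in Set.Ioo (-1 : ℝ) 1, ∫⁻ y in Set.Ioo (-1 : ℝ) 1,
          (‖ustar b₀ b₁ ((j : ℝ) * y) - ustar b₀ b₁ ((j : ℝ) * x)‖₊ : ℝ≥0∞) ^ p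
            / (‖y - x‖₊ : ℝ≥0∞) ^ (2 : ℝ) := by
  have hj1 : (1:ℝ) ≤ (j:ℝ) := by exact_mod_cast hj
  have hjpos : (0:ℝ) < (j:ℝ) := by linarith
  set c : ℝ := (j : ℝ)⁻¹ with hcdef
  have hc0 : 0 < c := inv_pos.mpr hjpos
  have hc1 : c ≤ 1 := by
    rw [hcdef]
    exact inv_le_one_of_one_le₀ hj1
  have hmul : (j:ℝ) * c = 1 := mul_inv_cancel₀ hjpos.ne'
  set K : ℝ := ‖b₁ - b₀‖ ^ p with hKdef
  have hK : 0 ≤ K := by positivity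
  set L : ℝ := Real.log ((1 + c) ^ 2 / (4 * c)) with hLdef
  have hLval : Real.log (((j:ℝ) + 1) ^ 2 / (4 * (j:ℝ))) = L := by
    rw [hLdef, hcdef]
    congr 1
    rw [div_eq_div_iff (by positivity) (by positivity)]
    field_simp
  have hL0 : 0 ≤ L := by
    apply Real.log_nonneg
    rw [le_div_iff₀ (by positivity)]
    nlinarith [sq_nonneg (1 - c)]
  have hsubL : Ioo (-1:ℝ) (-c) ⊆ Ioo (-1) 1 := Ioo_subset_Ioo le_rfl (by linarith)
  have hsubR : Ioo c 1 ⊆ Ioo (-1:ℝ) 1 := Ioo_subset_Ioo (by linarith) le_rfl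
  have hdisj : Disjoint (Ioo (-1:ℝ) (-c)) (Ioo c 1) := by
    rw [Set.disjoint_left]
    intro x hx hx'
    have := hx.2; have := hx'.1
    linarith
  have hustar_lo : ∀ x ∈ Ioo (-1:ℝ) (-c), ustar b₀ b₁ ((j:ℝ) * x) = b₀ := by
    intro x hx
    unfold ustar
    rw [if_pos]
    nlinarith [mul_pos hjpos (show (0:ℝ) < -c - x by linarith [hx.2])]
  have hustar_hi : ∀ y ∈ Ioo c (1:ℝ), ustar b₀ b₁ ((j:ℝ) * y) = b₁ := by
    intro y hy
    have hgt : (1:ℝ) < (j:ℝ) * y := by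
      nlinarith [mul_pos hjpos (show (0:ℝ) < y - c by linarith [hy.1])]
    unfold ustar
    rw [if_neg (by linarith), if_neg (by linarith)]
  -- left region
  have hleft : ENNReal.ofReal K * ENNReal.ofReal L
      ≤ ∫⁻ x in Ioo (-1:ℝ) (-c), ∫⁻ y in Ioo (-1:ℝ) 1,
          (‖ustar b₀ b₁ ((j : ℝ) * y) - ustar b₀ b₁ ((j : ℝ) * x)‖₊ : ℝ≥0∞) ^ p
            / (‖y - x‖₊ : ℝ≥0∞) ^ (2 : ℝ) := by
    have hptwise : ∀ x ∈ Ioo (-1:ℝ) (-c),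
        ENNReal.ofReal K * ENNReal.ofReal ((c - x)⁻¹ - (1 - x)⁻¹)
          ≤ ∫⁻ y in Ioo (-1:ℝ) 1,
              (‖ustar b₀ b₁ ((j : ℝ) * y) - ustar b₀ b₁ ((j : ℝ) * x)‖₊ : ℝ≥0∞) ^ p
                / (‖y - x‖₊ : ℝ≥0∞) ^ (2 : ℝ) := by
      intro x hx
      have heq : ∫⁻ y in Ioo c (1:ℝ),
          (‖ustar b₀ b₁ ((j : ℝ) * y) - ustar b₀ b₁ ((j : ℝ) * x)‖₊ : ℝ≥0∞) ^ p
            / (‖y - x‖₊ : ℝ≥0∞) ^ (2 : ℝ)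
          = ENNReal.ofReal K * ENNReal.ofReal ((c - x)⁻¹ - (1 - x)⁻¹) := by
        have hcongr : ∫⁻ y in Ioo c (1:ℝ),
            (‖ustar b₀ b₁ ((j : ℝ) * y) - ustar b₀ b₁ ((j : ℝ) * x)‖₊ : ℝ≥0∞) ^ p
              / (‖y - x‖₊ : ℝ≥0∞) ^ (2 : ℝ)
            = ∫⁻ y in Ioo c (1:ℝ),
                ENNReal.ofReal K * ENNReal.ofReal (((y - x) ^ 2)⁻¹) :=
          setLIntegral_congr_fun measurableSet_Ioo (fun y hy => by
            rw [hustar_hi y hy, hustar_lo x hx, hKdef]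
            exact point_eq (b₁ - b₀) p hp x y
              (by have := hy.1; have := hx.2; intro h; nlinarith))
        rw [hcongr, lintegral_const_mul' _ _ ENNReal.ofReal_ne_top,
          inner_calc c 1 x hc1 (fun h => absurd h.1 (not_le.mpr (by linarith [hx.2])))]
      rw [← heq]
      exact lintegral_mono_set hsubR
    calc ENNReal.ofReal K * ENNReal.ofReal L
        = ∫⁻ x in Ioo (-1:ℝ) (-c),
            ENNReal.ofReal K * ENNReal.ofReal ((c - x)⁻¹ - (1 - x)⁻¹) := by
          rw [lintegral_const_mul' _ _ ENNReal.ofReal_ne_top, outer_left c hc0 hc1, hLdef]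
      _ ≤ _ := setLIntegral_mono' measurableSet_Ioo hptwise
  -- right region
  have hright : ENNReal.ofReal K * ENNReal.ofReal L
      ≤ ∫⁻ x in Ioo c (1:ℝ), ∫⁻ y in Ioo (-1:ℝ) 1,
          (‖ustar b₀ b₁ ((j : ℝ) * y) - ustar b₀ b₁ ((j : ℝ) * x)‖₊ : ℝ≥0∞) ^ p
            / (‖y - x‖₊ : ℝ≥0∞) ^ (2 : ℝ) := by
    have hptwise : ∀ x ∈ Ioo c (1:ℝ),
        ENNReal.ofReal K * ENNReal.ofReal ((-1 - x)⁻¹ - (-c - x)⁻¹)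
          ≤ ∫⁻ y in Ioo (-1:ℝ) 1,
              (‖ustar b₀ b₁ ((j : ℝ) * y) - ustar b₀ b₁ ((j : ℝ) * x)‖₊ : ℝ≥0∞) ^ p
                / (‖y - x‖₊ : ℝ≥0∞) ^ (2 : ℝ) := by
      intro x hx
      have heq : ∫⁻ y in Ioo (-1:ℝ) (-c),
          (‖ustar b₀ b₁ ((j : ℝ) * y) - ustar b₀ b₁ ((j : ℝ) * x)‖₊ : ℝ≥0∞) ^ p
            / (‖y - x‖₊ : ℝ≥0∞) ^ (2 : ℝ)
          = ENNReal.ofReal K * ENNReal.ofReal ((-1 - x)⁻¹ - (-c - x)⁻¹) := by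
        have hcongr : ∫⁻ y in Ioo (-1:ℝ) (-c),
            (‖ustar b₀ b₁ ((j : ℝ) * y) - ustar b₀ b₁ ((j : ℝ) * x)‖₊ : ℝ≥0∞) ^ p
              / (‖y - x‖₊ : ℝ≥0∞) ^ (2 : ℝ)
            = ∫⁻ y in Ioo (-1:ℝ) (-c),
                ENNReal.ofReal K * ENNReal.ofReal (((y - x) ^ 2)⁻¹) :=
          setLIntegral_congr_fun measurableSet_Ioo (fun y hy => by
            rw [hustar_hi x hx, hustar_lo y hy, hKdef, norm_sub_rev b₁ b₀]
            exact point_eq (b₀ - b₁) p hp x y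
              (by have := hy.2; have := hx.1; intro h; nlinarith))
        rw [hcongr, lintegral_const_mul' _ _ ENNReal.ofReal_ne_top,
          inner_calc (-1) (-c) x (by linarith) (fun h => absurd h.2 (not_le.mpr (by linarith [hx.1])))]
      rw [← heq]
      exact lintegral_mono_set hsubL
    calc ENNReal.ofReal K * ENNReal.ofReal L
        = ∫⁻ x in Ioo c (1:ℝ),
            ENNReal.ofReal K * ENNReal.ofReal ((-1 - x)⁻¹ - (-c - x)⁻¹) := by
          rw [lintegral_const_mul' _ _ ENNReal.ofReal_ne_top, outer_right c hc0 hc1, hLdef]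
      _ ≤ _ := setLIntegral_mono' measurableSet_Ioo hptwise
  rw [hLval, show 2 * K * L = K * L + K * L by ring,
    ENNReal.ofReal_add (mul_nonneg hK hL0) (mul_nonneg hK hL0),
    ENNReal.ofReal_mul hK]
  calc ENNReal.ofReal K * ENNReal.ofReal L + ENNReal.ofReal K * ENNReal.ofReal L
      ≤ (∫⁻ x in Ioo (-1:ℝ) (-c), ∫⁻ y in Ioo (-1:ℝ) 1,
          (‖ustar b₀ b₁ ((j : ℝ) * y) - ustar b₀ b₁ ((j : ℝ) * x)‖₊ : ℝ≥0∞) ^ p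
            / (‖y - x‖₊ : ℝ≥0∞) ^ (2 : ℝ))
        + ∫⁻ x in Ioo c (1:ℝ), ∫⁻ y in Ioo (-1:ℝ) 1,
          (‖ustar b₀ b₁ ((j : ℝ) * y) - ustar b₀ b₁ ((j : ℝ) * x)‖₊ : ℝ≥0∞) ^ p
            / (‖y - x‖₊ : ℝ≥0∞) ^ (2 : ℝ) := add_le_add hleft hright
    _ = ∫⁻ x in Ioo (-1:ℝ) (-c) ∪ Ioo c 1, ∫⁻ y in Ioo (-1:ℝ) 1,
          (‖ustar b₀ b₁ ((j : ℝ) * y) - ustar b₀ b₁ ((j : ℝ) * x)‖₊ : ℝ≥0∞) ^ p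
            / (‖y - x‖₊ : ℝ≥0∞) ^ (2 : ℝ) :=
        (lintegral_union measurableSet_Ioo hdisj).symm
    _ ≤ _ := lintegral_mono_set (union_subset hsubL hsubR)
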